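/- Let [a₁,…,a_r] and [b₁,…,b_s] be conjugate strings and let t ≥ 0 be an integer. Let N/A (in lowest terms, 0 < A < N) be the value of the string [a_r,…,a₁, t+2, b₁,…,b_s]. Then the string with value N/(N−A) is a T_{t+1}-string; that is, N/(N−A) = (t+1)m²/((t+1)mq − 1) for some integers m ≥ 2 and q with 1 ≤ q < m and gcd(q,m) = 1. -/

import Mathlib

/-- The value of the Hirzebruch–Jung continued fraction
`[b₁,…,b_r] = b₁ − 1/(b₂ − 1/(⋯ − 1/b_r))`.
(For the empty list we set the value to `0`; since `1/0 = 0` in `ℚ`, the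
recursion then gives the correct value `b_r` for singleton lists.) -/
def hjValue : List ℤ → ℚ
  | [] => 0
  | b :: l => (b : ℚ) - 1 / hjValue l

/-- A string is a nonempty list of integers, each at least `2`. -/
def IsString (l : List ℤ) : Prop := l ≠ [] ∧ ∀ b ∈ l, 2 ≤ b

/-- Two strings are conjugate if their Hirzebruch–Jung continued fraction
values are `n/a` and `n/(n−a)` for some integers `0 < a < n` with
`gcd(a,n) = 1`. -/
def Conjugate (l l' : List ℤ) : Prop :=
  ∃ n a : ℤ, 0 < a ∧ a < n ∧ IsCoprime a n ∧
    hjValue l = (n : ℚ) / (a : ℚ) ∧ hjValue l' = (n : ℚ) / ((n : ℚ) - (a : ℚ))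

/-- The matrix `(p, q, r, s)` associated to a list, i.e. the entries of the
product of the matrices `[[b, -1], [1, 0]]`, arranged as `[[p, r], [q, s]]`. -/
def hjM : List ℤ → ℤ × ℤ × ℤ × ℤ
  | [] => (1, 0, 0, 1)
  | b :: l => (b * (hjM l).1 - (hjM l).2.1, (hjM l).1,
               b * (hjM l).2.2.1 - (hjM l).2.2.2, (hjM l).2.2.1)

lemma hjM_cons (b : ℤ) (l : List ℤ) :
    hjM (b :: l) = (b * (hjM l).1 - (hjM l).2.1, (hjM l).1,
      b * (hjM l).2.2.1 - (hjM l).2.2.2, (hjM l).2.2.1) := rfl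

lemma hjM_det (l : List ℤ) :
    (hjM l).1 * (hjM l).2.2.2 - (hjM l).2.1 * (hjM l).2.2.1 = 1 := by
  induction l with
  | nil => simp [hjM]
  | cons b l ih =>
    simp only [hjM_cons]
    linear_combination ih

lemma hjM_append (u v : List ℤ) :
    hjM (u ++ v) = ((hjM u).1 * (hjM v).1 + (hjM u).2.2.1 * (hjM v).2.1,
      (hjM u).2.1 * (hjM v).1 + (hjM u).2.2.2 * (hjM v).2.1,
      (hjM u).1 * (hjM v).2.2.1 + (hjM u).2.2.1 * (hjM v).2.2.2,
      (hjM u).2.1 * (hjM v).2.2.1 + (hjM u).2.2.2 * (hjM v).2.2.2) := by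
  induction u with
  | nil => simp [hjM]
  | cons b u ih =>
    simp only [List.cons_append, hjM_cons, ih, Prod.mk.injEq]
    refine ⟨by ring, trivial, by ring, trivial⟩

lemma hjM_reverse (l : List ℤ) :
    hjM l.reverse = ((hjM l).1, -(hjM l).2.2.1, -(hjM l).2.1, (hjM l).2.2.2) := by
  induction l with
  | nil => simp [hjM]
  | cons b l ih =>
    rw [List.reverse_cons, hjM_append, ih]
    simp only [hjM_cons, hjM, Prod.mk.injEq]
    refine ⟨by ring, by ring, by ring, by ring⟩

lemma hjM_value (l : List ℤ) (hl : ∀ b ∈ l, 2 ≤ b) :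
    0 ≤ (hjM l).2.1 ∧ (hjM l).2.1 < (hjM l).1 ∧
      hjValue l = ((hjM l).1 : ℚ) / ((hjM l).2.1 : ℚ) := by
  induction l with
  | nil => simp [hjM, hjValue]
  | cons b l ih =>
    obtain ⟨hq, hqp, hv⟩ := ih (fun x hx => hl x (List.mem_cons_of_mem _ hx))
    have hb : (2 : ℤ) ≤ b := hl b (List.mem_cons_self)
    have hp : (0 : ℤ) < (hjM l).1 := lt_of_le_of_lt hq hqp
    refine ⟨by simp only [hjM_cons]; linarith, by simp only [hjM_cons]; nlinarith, ?_⟩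
    have hpQ : ((hjM l).1 : ℚ) ≠ 0 := Int.cast_ne_zero.mpr hp.ne'
    simp only [hjM_cons]
    show (b : ℚ) - 1 / hjValue l = _
    rw [hv, one_div_div]
    push_cast
    field_simp

lemma hjM_q_pos (l : List ℤ) (hne : l ≠ []) (hl : ∀ b ∈ l, 2 ≤ b) :
    1 ≤ (hjM l).2.1 := by
  cases l with
  | nil => exact absurd rfl hne
  | cons b l =>
    obtain ⟨hq, hqp, _⟩ := hjM_value l (fun x hx => hl x (List.mem_cons_of_mem _ hx))
    simp only [hjM_cons]
    linarith

lemma hjM_coprime (l : List ℤ) : IsCoprime (hjM l).1 (hjM l).2.1 :=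
  ⟨(hjM l).2.2.2, -(hjM l).2.2.1, by linarith [hjM_det l]⟩

lemma frac_unique {X Y N A : ℤ} (hY : 0 < Y) (hA : 0 < A)
    (hXY : IsCoprime X Y) (hNA : IsCoprime N A)
    (h : (X : ℚ) / (Y : ℚ) = (N : ℚ) / (A : ℚ)) : X = N ∧ Y = A := by
  have hY' : (Y : ℚ) ≠ 0 := Int.cast_ne_zero.mpr hY.ne'
  have hA' : (A : ℚ) ≠ 0 := Int.cast_ne_zero.mpr hA.ne'
  rw [div_eq_div_iff hY' hA'] at h
  have h' : X * A = N * Y := by exact_mod_cast h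
  have h1 : Y ∣ A := hXY.symm.dvd_of_dvd_mul_left ⟨N, by linarith⟩
  have h2 : A ∣ Y := hNA.symm.dvd_of_dvd_mul_left ⟨X, by linarith⟩
  have hYA : Y = A := Int.dvd_antisymm hY.le hA.le h1 h2
  refine ⟨?_, hYA⟩
  have := h'
  rw [hYA] at this
  exact mul_right_cancel₀ hA.ne' this

/-- Let `[a₁,…,a_r]` and `[b₁,…,b_s]` be conjugate strings and `t ≥ 0`. If the
string `[a_r,…,a₁, t+2, b₁,…,b_s]` has value `N/A` in lowest terms
(`0 < A < N`), then the string with value `N/(N−A)` is a `T_{t+1}`-string,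
i.e. `N/(N−A) = (t+1)m²/((t+1)mq − 1)` for some `m ≥ 2` and `1 ≤ q < m` with
`gcd(q,m) = 1`. -/
theorem stmt_17 (la lb : List ℤ) (hla : IsString la) (hlb : IsString lb)
    (hconj : Conjugate la lb) (t : ℕ) (N A : ℤ)
    (hA : 0 < A) (hAN : A < N) (hcop : IsCoprime A N)
    (hval : hjValue (la.reverse ++ ((t : ℤ) + 2) :: lb) = (N : ℚ) / (A : ℚ)) :
    ∃ m q : ℤ, 2 ≤ m ∧ 1 ≤ q ∧ q < m ∧ IsCoprime q m ∧
      (N : ℚ) / ((N : ℚ) - (A : ℚ)) =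
        ((((t : ℤ) + 1) * m ^ 2 : ℤ) : ℚ) / ((((t : ℤ) + 1) * m * q - 1 : ℤ) : ℚ) := by
  obtain ⟨hlane, hla2⟩ := hla
  obtain ⟨hlbne, hlb2⟩ := hlb
  obtain ⟨n, a, ha0, han, hcopan, hvla, hvlb⟩ := hconj
  -- data for la
  obtain ⟨hqa0, hqpa, hva⟩ := hjM_value la hla2
  have hqa1 : 1 ≤ (hjM la).2.1 := hjM_q_pos la hlane hla2
  have hida : (hjM la).1 = n ∧ (hjM la).2.1 = a := by
    refine frac_unique hqa1 ha0 (hjM_coprime la) hcopan.symm ?_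
    rw [← hva, hvla]
  -- data for lb
  obtain ⟨hqb0, hqpb, hvb⟩ := hjM_value lb hlb2
  have hqb1 : 1 ≤ (hjM lb).2.1 := hjM_q_pos lb hlbne hlb2
  have hcopnna : IsCoprime n (n - a) := by
    obtain ⟨u, v, huv⟩ := hcopan
    exact ⟨u + v, -u, by linarith [huv]⟩
  have hidb : (hjM lb).1 = n ∧ (hjM lb).2.1 = n - a := by
    refine frac_unique hqb1 (by linarith) (hjM_coprime lb) hcopnna ?_
    rw [← hvb, hvlb]
    push_cast
    ring_nf
  -- the big list
  set L := la.reverse ++ ((t : ℤ) + 2) :: lb with hLdef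
  have hL2 : ∀ b ∈ L, 2 ≤ b := by
    intro x hx
    rw [hLdef, List.mem_append, List.mem_cons] at hx
    rcases hx with hx | hx | hx
    · exact hla2 x (List.mem_reverse.mp hx)
    · subst hx; omega
    · exact hlb2 x hx
  have hLne : L ≠ [] := by
    rw [hLdef]
    simp
  obtain ⟨hqL0, hqLp, hvL⟩ := hjM_value L hL2
  have hqL1 : 1 ≤ (hjM L).2.1 := hjM_q_pos L hLne hL2
  have hidL : (hjM L).1 = N ∧ (hjM L).2.1 = A := by
    refine frac_unique hqL1 hA (hjM_coprime L) hcop.symm ?_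
    rw [← hvL, hLdef, hval]
  -- reversed string data
  obtain ⟨hqr0, hqrp, _⟩ := hjM_value la.reverse
    (fun x hx => hla2 x (List.mem_reverse.mp hx))
  have hqr1 : 1 ≤ (hjM la.reverse).2.1 :=
    hjM_q_pos la.reverse (by simpa using hlane)
      (fun x hx => hla2 x (List.mem_reverse.mp hx))
  rw [hjM_reverse la] at hqr1 hqrp
  have hbr1 : 1 ≤ -(hjM la).2.2.1 := by simpa using hqr1
  have hbrp : -(hjM la).2.2.1 < (hjM la).1 := by simpa using hqrp
  -- abbreviations
  set p := (hjM la).1 with hp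
  set q := (hjM la).2.1 with hq
  set r := (hjM la).2.2.1 with hr
  set s := (hjM la).2.2.2 with hs
  have hdeta : p * s - q * r = 1 := hjM_det la
  obtain ⟨hpn, hqa⟩ := hida
  obtain ⟨hpbn, hqbna⟩ := hidb
  -- compute the matrix of L
  have hLmat : (hjM L).1 = p * (((t : ℤ) + 2) * (hjM lb).1 - (hjM lb).2.1) + (-q) * (hjM lb).1
      ∧ (hjM L).2.1 = (-r) * (((t : ℤ) + 2) * (hjM lb).1 - (hjM lb).2.1) + s * (hjM lb).1 := by
    rw [hLdef, hjM_append, hjM_reverse la, hjM_cons]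
    exact ⟨rfl, rfl⟩
  have hNval : N = ((t : ℤ) + 1) * n ^ 2 := by
    rw [← hidL.1, hLmat.1, hpn, hqa, hpbn, hqbna]
    ring
  have hAval : A = -(((t : ℤ) + 1) * n * r) + 1 := by
    rw [← hidL.2, hLmat.2, hpbn, hqbna]
    rw [hpn, hqa] at hdeta
    linear_combination hdeta
  -- conclusion
  refine ⟨n, n + r, by linarith, by linarith, by linarith, ?_, ?_⟩
  · rw [hpn, hqa] at hdeta
    exact ⟨-a, a + s, by linear_combination hdeta⟩
  · have hden : (N : ℚ) - (A : ℚ) = ((((t : ℤ) + 1) * n * (n + r) - 1 : ℤ) : ℚ) := by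
      rw [hNval, hAval]
      push_cast
      ring
    rw [hden, hNval]
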